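/- There exists a smooth nonlinear Lagrangian with non-vanishing scale anomaly whose effective light cones are Minkowskian; concretely, L(F, G) := −F/4 + G² satisfies: (i) its scale anomaly T(F,G) := 4(F ∂L/∂F + G ∂L/∂G − L) equals 4G², which is not identically zero; (ii) ∂²L/∂F² = 0 and ∂²L/∂F∂G = 0 everywhere, so that Ω₃ := L_F L_{FG} + 2F L_{FF} L_{FG} + G(L_{FG}² − L_{FF}²) = 0 and hence Ω = 0 is a root of the characteristic quadratic Ω²Ω₁ + ΩΩ₂ + Ω₃ = 0; and (iii) for this root the conformality condition L_{FF} + Ω·L_{FG} = 0 holds at every point. -/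

import Mathlib

lemma hasD' (p : ℝ × ℝ) : HasFDerivAt (fun p : ℝ × ℝ => -p.1 / 4 + p.2 ^ 2)
    ((-(1/4) : ℝ) • ContinuousLinearMap.fst ℝ ℝ ℝ + (2 * p.2) • ContinuousLinearMap.snd ℝ ℝ ℝ) p := by
  have e : (fun p : ℝ × ℝ => -p.1 / 4 + p.2 ^ 2)
      = fun p : ℝ × ℝ => (-(1/4) : ℝ) • p.1 + p.2 * p.2 := by
    funext q; simp; ring
  rw [e]
  have h1 := (hasFDerivAt_fst (𝕜 := ℝ) (p := p) (F := ℝ)).const_smul (-(1/4) : ℝ)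
  have h2 := (hasFDerivAt_snd (𝕜 := ℝ) (p := p) (E := ℝ)).mul
      (hasFDerivAt_snd (𝕜 := ℝ) (p := p) (E := ℝ))
  have := h1.add h2
  refine HasFDerivAt.congr_fderiv this ?_
  ext v <;> simp <;> ring

/-- Partial derivative with respect to the first variable F. -/
noncomputable def pderivF (L : ℝ × ℝ → ℝ) (p : ℝ × ℝ) : ℝ := fderiv ℝ L p (1, 0)

/-- Partial derivative with respect to the second variable G. -/
noncomputable def pderivG (L : ℝ × ℝ → ℝ) (p : ℝ × ℝ) : ℝ := fderiv ℝ L p (0, 1)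

lemma pF' : pderivF (fun p : ℝ × ℝ => -p.1 / 4 + p.2 ^ 2) = fun _ => -(1/4) := by
  funext p; simp [pderivF, (hasD' p).fderiv]

lemma pG' : pderivG (fun p : ℝ × ℝ => -p.1 / 4 + p.2 ^ 2) = fun p => 2 * p.2 := by
  funext p; simp [pderivG, (hasD' p).fderiv]

lemma pFconst (c : ℝ) : pderivF (fun _ : ℝ × ℝ => c) = fun _ => 0 := by
  funext p; simp [pderivF]

lemma pGconst (c : ℝ) : pderivG (fun _ : ℝ × ℝ => c) = fun _ => 0 := by
  funext p; simp [pderivG]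

/-- The nonlinear Lagrangian L(F,G) = −F/4 + G² has non-vanishing scale anomaly
T = 4G², yet L_FF ≡ 0 and L_FG ≡ 0, so Ω = 0 is a root of the characteristic quadratic
and the conformality condition L_FF + Ω L_FG = 0 holds everywhere: its effective light
cones are Minkowskian. -/
theorem anomalous_but_conformal
    (L : ℝ × ℝ → ℝ) (hL : L = fun p => -p.1 / 4 + p.2 ^ 2)
    (T : ℝ × ℝ → ℝ)
    (hT : T = fun p => 4 * (p.1 * pderivF L p + p.2 * pderivG L p - L p))
    (Ω₁ Ω₂ Ω₃ : ℝ × ℝ → ℝ)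
    (hΩ₁ : Ω₁ = fun p => -(pderivF L p * pderivG (pderivF L) p) +
      2 * p.1 * pderivG (pderivF L) p * pderivG (pderivG L) p +
      p.2 * (pderivG (pderivG L) p ^ 2 - pderivG (pderivF L) p ^ 2))
    (hΩ₂ : Ω₂ = fun p => (pderivF L p + 2 * p.2 * pderivG (pderivF L) p) *
        (pderivG (pderivG L) p - pderivF (pderivF L) p) +
      2 * p.1 * (pderivF (pderivF L) p * pderivG (pderivG L) p +
        pderivG (pderivF L) p ^ 2))
    (hΩ₃ : Ω₃ = fun p => pderivF L p * pderivG (pderivF L) p +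
      2 * p.1 * pderivF (pderivF L) p * pderivG (pderivF L) p +
      p.2 * (pderivG (pderivF L) p ^ 2 - pderivF (pderivF L) p ^ 2)) :
    (∀ p : ℝ × ℝ, T p = 4 * p.2 ^ 2) ∧ ¬ (∀ p : ℝ × ℝ, T p = 0) ∧
    (∀ p : ℝ × ℝ, pderivF (pderivF L) p = 0) ∧
    (∀ p : ℝ × ℝ, pderivG (pderivF L) p = 0) ∧
    (∀ p : ℝ × ℝ, Ω₃ p = 0) ∧
    (∀ p : ℝ × ℝ, (0 : ℝ) ^ 2 * Ω₁ p + 0 * Ω₂ p + Ω₃ p = 0) ∧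
    (∀ p : ℝ × ℝ, pderivF (pderivF L) p + 0 * pderivG (pderivF L) p = 0) := by
  subst hL
  have hFF : ∀ p : ℝ × ℝ, pderivF (pderivF fun p : ℝ × ℝ => -p.1 / 4 + p.2 ^ 2) p = 0 := by
    intro p; rw [pF', pFconst]
  have hFG : ∀ p : ℝ × ℝ, pderivG (pderivF fun p : ℝ × ℝ => -p.1 / 4 + p.2 ^ 2) p = 0 := by
    intro p; rw [pF', pGconst]
  have hTval : ∀ p : ℝ × ℝ, T p = 4 * p.2 ^ 2 := by
    intro p; rw [hT]; simp only [pF', pG']; ring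
  refine ⟨hTval, ?_, hFF, hFG, ?_, ?_, ?_⟩
  · intro h
    have := h (0, 1)
    rw [hTval (0, 1)] at this
    norm_num at this
  · intro p; rw [hΩ₃]; simp [hFF p, hFG p]
  · intro p; rw [hΩ₃]; simp [hFF p, hFG p]
  · intro p; simp [hFF p, hFG p]
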